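/- For z ∈ [0,1), it holds that 1 - 2(1-z)/((1 + 2√(1-z))(1 + √(1-z))) = (y_c)^{-2}·K(1,z) where K(1,z) := (y_c)²·φ(0)/(1 - φ(0)/z)·(φ(z) - (φ(0)/z)·φ(φ(0))) for z > φ(0) = 3/4, y_c = 1/12, φ(z) = 1 - (1+1/√(1-z))^{-2}, and φ(φ(0)) = 8/9. That is, for z ∈ (3/4, 1): (3/4)/(1 - (3/4)/z)·(φ(z) - (3/(4z))·(8/9)) = 1 - 2(1-z)/((1 + 2√(1-z))(1 + √(1-z))). -/

import Mathlib

theorem delta_cap_generating_identity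
    (φ : ℝ → ℝ)
    (hφ : ∀ z ∈ Set.Ico (0:ℝ) 1, φ z = 1 - (1 + 1 / Real.sqrt (1 - z))⁻¹ ^ 2) :
    ∀ z ∈ Set.Ioo (3/4 : ℝ) 1,
      (3/4) / (1 - (3/4) / z) * (φ z - (3 / (4 * z)) * (8/9)) =
        1 - 2 * (1 - z) /
          ((1 + 2 * Real.sqrt (1 - z)) * (1 + Real.sqrt (1 - z))) := by
  intro z hz
  obtain ⟨hz1, hz2⟩ := hz
  rw [hφ z ⟨by linarith, hz2⟩]
  set s := Real.sqrt (1 - z) with hs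
  have hs0 : 0 < s := Real.sqrt_pos.mpr (by linarith)
  have hs2 : s ^ 2 = 1 - z := Real.sq_sqrt (by linarith)
  have hzval : z = 1 - s ^ 2 := by linarith
  have hslt : s < 1 / 2 := by
    nlinarith [hs2, hs0]
  rw [hzval]
  have h0 : (1:ℝ) - s ^ 2 ≠ 0 := by nlinarith
  have hd : (1:ℝ) - 3 / (4 * (1 - s ^ 2)) ≠ 0 := by
    have h4 : (0:ℝ) < 4 * (1 - s ^ 2) := by nlinarith
    have : 3 / (4 * (1 - s ^ 2)) < 1 := by
      rw [div_lt_one h4]; nlinarith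
    linarith
  have h1 : (1:ℝ) + s ≠ 0 := by positivity
  have h2 : (1:ℝ) + 2 * s ≠ 0 := by positivity
  have h3 : (1:ℝ) + 1 / s ≠ 0 := by positivity
  have hsne : s ≠ 0 := ne_of_gt hs0
  have hDpos : (0:ℝ) < 144 + 288*s - 576*s^2 - 1440*s^3 - 144*s^4 + 1152*s^5 + 576*s^6 := by
    have : (0:ℝ) < 144*(1+s)^3*(1-s)*(1+2*s)*(1-2*s) := by
      have a1 : (0:ℝ) < 1 + s := by linarith
      have a2 : (0:ℝ) < 1 - s := by linarith
      have a3 : (0:ℝ) < 1 + 2*s := by linarith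
      have a4 : (0:ℝ) < 1 - 2*s := by linarith
      positivity
    nlinarith [this]
  have hD : (144 + (s * 288 - s ^ 2 * 576) + (-(s ^ 3 * 1440) - s ^ 4 * 144) + s ^ 5 * 1152 + s ^ 6 * 576 : ℝ) ≠ 0 := by
    intro h; apply ne_of_gt hDpos; linarith
  have h12 : (1:ℝ) - 4 * s ^ 2 ≠ 0 := by nlinarith
  have hA : (1:ℝ) - (1 + 1 / s)⁻¹ ^ 2 = (1 + 2*s) / (1 + s)^2 := by
    rw [inv_pow, inv_eq_one_div]
    field_simp
    ring
  rw [hA]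
  have hB : (4 * (4 * (1 - s ^ 2) - 3) * ((1 + s) ^ 2 * (4 * (1 - s ^ 2) * 9)) : ℝ) ≠ 0 := by
    have b1 : (0:ℝ) < 4 * (1 - s ^ 2) - 3 := by nlinarith
    have b2 : (0:ℝ) < (1 + s) ^ 2 := by positivity
    have b3 : (0:ℝ) < 1 - s ^ 2 := by nlinarith
    positivity
  field_simp
  rw [div_eq_iff (by nlinarith)]
  ring
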